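/- Let E be a normed real vector space with strictly convex norm (i.e., the closed unit ball is strictly convex), let C ⊆ E be a convex compact set, and let f : C → C be 1-Lipschitz. Then the set of fixed points of f is nonempty, compact, and convex. -/

import Mathlib

open Set Filter Topology

theorem fixed_point_set_nonempty_compact_convex
    {E : Type*} [NormedAddCommGroup E] [NormedSpace ℝ E]
    (hsc : ∀ x y : E, ‖x‖ = 1 → ‖y‖ = 1 → x ≠ y → ‖(1/2 : ℝ) • (x + y)‖ < 1)
    (C : Set E) (hC : Convex ℝ C) (hCcpt : IsCompact C) (hCne : C.Nonempty)
    (f : E → E) (hf : MapsTo f C C) (hlip : LipschitzOnWith 1 f C) :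
    ({x ∈ C | f x = x}).Nonempty ∧ IsCompact {x ∈ C | f x = x} ∧
      Convex ℝ {x ∈ C | f x = x} := by
  have hscs : StrictConvexSpace ℝ E :=
    StrictConvexSpace.of_norm_combo_lt_one fun x y hx hy hne =>
      ⟨1/2, 1/2, by norm_num, by simpa [smul_add] using hsc x y hx hy hne⟩
  have hdist : ∀ x ∈ C, ∀ y ∈ C, dist (f x) (f y) ≤ dist x y := by
    intro x hx y hy
    simpa using hlip.dist_le_mul x hx y hy
  have hfc : ContinuousOn f C := hlip.continuousOn
  -- Nonemptiness
  obtain ⟨x0, hx0⟩ := hCne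
  -- approximate contractions
  have key : ∀ n : ℕ, ∃ c ∈ C, (1 - (1:ℝ)/(n+1)) • f c + ((1:ℝ)/(n+1)) • x0 = c := by
    intro n
    set ε : ℝ := 1/(n+1) with hε
    have hε0 : 0 < ε := by positivity
    have hε1 : ε ≤ 1 := by
      rw [hε]
      rw [div_le_one (by positivity)]
      linarith [Nat.cast_nonneg (α := ℝ) n]
    set g : E → E := fun x => (1 - ε) • f x + ε • x0 with hg
    have hgmaps : MapsTo g C C := fun x hx =>
      hC (hf hx) hx0 (by linarith) hε0.le (by ring)
    set K : NNReal := Real.toNNReal (1 - ε) with hK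
    have hK1 : (K : ℝ) = 1 - ε := Real.coe_toNNReal _ (by linarith)
    have hKlt : K < 1 := by
      rw [← NNReal.coe_lt_coe, hK1]
      push_cast
      linarith
    have hglip : LipschitzOnWith K g C := by
      apply LipschitzOnWith.of_dist_le_mul
      intro x hx y hy
      have : dist (g x) (g y) = (1 - ε) * dist (f x) (f y) := by
        simp only [hg, dist_eq_norm]
        rw [add_sub_add_right_eq_sub, ← smul_sub, norm_smul, Real.norm_eq_abs,
          abs_of_nonneg (by linarith)]
      rw [this, hK1]
      have := hdist x hx y hy
      nlinarith [dist_nonneg (x := f x) (y := f y)]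
    have hcontr : ContractingWith K (hgmaps.restrict g C C) := by
      exact ⟨hKlt, LipschitzOnWith.mapsToRestrict hgmaps hglip⟩
    obtain ⟨c, hcC, hfix, -⟩ :=
      hcontr.exists_fixedPoint' hCcpt.isComplete hgmaps hx0 (edist_ne_top _ _)
    exact ⟨c, hcC, hfix⟩
  choose c hcC hcfix using key
  -- diameter bound
  obtain ⟨D, hD⟩ := hCcpt.isBounded.subset_closedBall x0
  have hsmall : ∀ n : ℕ, ‖f (c n) - c n‖ ≤ (1/((n:ℝ)+1)) * (2 * D + 1) := by
    intro n
    have h1 : f (c n) - c n = ((1:ℝ)/((n:ℝ)+1)) • (f (c n) - x0) := by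
      nth_rewrite 2 [← hcfix n]
      module
    rw [h1, norm_smul, Real.norm_eq_abs, abs_of_nonneg (by positivity)]
    have hb : ‖f (c n) - x0‖ ≤ 2 * D + 1 := by
      have h2 : f (c n) ∈ C := hf (hcC n)
      have := hD h2
      rw [Metric.mem_closedBall, dist_eq_norm] at this
      linarith [norm_nonneg (f (c n) - x0)]
    exact mul_le_mul_of_nonneg_left hb (by positivity)
  obtain ⟨x, hxC, φ, hφ, hconv⟩ := hCcpt.tendsto_subseq hcC
  have htends0 : Tendsto (fun n => f (c (φ n)) - c (φ n)) atTop (𝓝 0) := by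
    rw [tendsto_zero_iff_norm_tendsto_zero]
    apply squeeze_zero (fun n => by positivity)
      (fun n => hsmall (φ n))
    have h1 : Tendsto (fun n : ℕ => (1/((n:ℝ)+1)) * (2*D+1)) atTop (𝓝 0) := by
      have := tendsto_one_div_add_atTop_nhds_zero_nat (𝕜 := ℝ)
      simpa using this.mul_const (2*D+1)
    exact h1.comp hφ.tendsto_atTop
  have htendsf : Tendsto (fun n => f (c (φ n))) atTop (𝓝 (f x)) := by
    have : Tendsto (fun n => c (φ n)) atTop (𝓝[C] x) :=
      tendsto_nhdsWithin_of_tendsto_nhds_of_eventually_within _ hconv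
        (Eventually.of_forall fun n => hcC (φ n))
    exact (hfc x hxC).tendsto.comp this
  have : Tendsto (fun n => f (c (φ n)) - c (φ n)) atTop (𝓝 (f x - x)) :=
    htendsf.sub hconv
  have hfx : f x = x := by
    have := tendsto_nhds_unique this htends0
    have := sub_eq_zero.mp this
    exact this
  refine ⟨⟨x, hxC, hfx⟩, ?_, ?_⟩
  · -- compactness: closed subset of compact
    apply hCcpt.of_isClosed_subset ?_ (sep_subset _ _)
    have hset : {x ∈ C | f x = x} = C ∩ (fun x => f x - x) ⁻¹' {0} := by
      ext y; simp [sub_eq_zero, eq_comm]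
    rw [hset]
    exact (hfc.sub continuousOn_id).preimage_isClosed_of_isClosed
      hCcpt.isClosed isClosed_singleton
  · -- convexity
    intro p hp q hq a b ha hb hab
    obtain ⟨hpC, hpfix⟩ := hp
    obtain ⟨hqC, hqfix⟩ := hq
    set z := a • p + b • q with hz
    have hzmem : z ∈ C := hC hpC hqC ha hb hab
    refine ⟨hzmem, ?_⟩
    by_cases hpq : p = q
    · have : z = p := by rw [hz, hpq, ← add_smul, hab, one_smul]
      rw [this, hpfix]
    -- distances
    have hd1 : dist (f z) p ≤ dist z p := by
      have := hdist z hzmem p hpC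
      rwa [hpfix] at this
    have hd2 : dist (f z) q ≤ dist z q := by
      have := hdist z hzmem q hqC
      rwa [hqfix] at this
    have hzp : dist p z = b * dist p q := by
      rw [dist_eq_norm, dist_eq_norm, hz]
      have : p - (a • p + b • q) = b • (p - q) := by
        rw [show a = 1 - b by linarith]; module
      rw [this, norm_smul, Real.norm_eq_abs, abs_of_nonneg hb]
    have hzq : dist z q = a * dist p q := by
      rw [dist_eq_norm, dist_eq_norm, hz]
      have : a • p + b • q - q = a • (p - q) := by
        rw [show b = 1 - a by linarith]; module
      rw [this, norm_smul, Real.norm_eq_abs, abs_of_nonneg ha]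
    have hsum : dist p z + dist z q = dist p q := by
      rw [hzp, hzq]; linear_combination dist p q * hab
    have htri : dist p q ≤ dist p (f z) + dist (f z) q := dist_triangle _ _ _
    have hle : dist p (f z) + dist (f z) q ≤ dist p q := by
      rw [dist_comm p (f z)]
      calc dist (f z) p + dist (f z) q ≤ dist z p + dist z q := by linarith
        _ = dist p q := by rw [dist_comm z p]; exact hsum
    have heq : dist p (f z) + dist (f z) q = dist p q := le_antisymm hle htri
    -- equalities
    have he1 : dist (f z) p = dist z p := by
      rw [dist_comm p (f z)] at heq
      linarith [dist_comm p z]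
    -- f z on segment
    have hwb : Wbtw ℝ p (f z) q := dist_add_dist_eq_iff.mp heq
    rw [← mem_segment_iff_wbtw] at hwb
    obtain ⟨a', b', ha', hb', hab', hfz⟩ := hwb
    -- dist p (f z) = b' * dist p q
    have hzp' : dist p (f z) = b' * dist p q := by
      rw [dist_eq_norm, dist_eq_norm, ← hfz]
      have : p - (a' • p + b' • q) = b' • (p - q) := by
        rw [show a' = 1 - b' by linarith]; module
      rw [this, norm_smul, Real.norm_eq_abs, abs_of_nonneg hb']
    have hpqne : dist p q ≠ 0 := by
      simpa [dist_eq_zero] using hpq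
    have hb'b : b' = b := by
      have h1 : b' * dist p q = b * dist p q := by
        rw [← hzp', ← hzp, dist_comm p (f z), he1, dist_comm z p]
      exact mul_right_cancel₀ hpqne h1
    have ha'a : a' = a := by linarith
    rw [← hfz, ha'a, hb'b]
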